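/- Let 0 < χ < 1 and let ν : ℝ → (0,∞) be a probability density with zero center of mass satisfying the characterization ν(p) = ∫_ℝ ∫_0^1 (χ + q²/2) ν(p − t q) ν(p − t q + q) dt dq for all p, and with second moment ∫_ℝ a² ν(a) da = 1 − χ. Let ψ : ℝ → ℝ be twice continuously differentiable with ψ'' > 0 everywhere, and suppose all the integrals below are finite. Then −∫_ℝ (ψ''(a))^{-1} ν(a) da + χ ∬_{ℝ×ℝ} ((a−b)/(ψ'(a)−ψ'(b))) ν(a)ν(b) da db − (1/2) ∬_{ℝ×ℝ} (ψ'(a)−ψ'(b))(a−b) ν(a)ν(b) da db + 2 ∫_ℝ a ψ'(a) ν(a) da + (1 − χ) − ∫_ℝ (ψ'(a))² ν(a) da ≤ − ∫_ℝ (ψ'(a) − a)² ν(a) da, where the quotient (a−b)/(ψ'(a)−ψ'(b)) is understood as 1/ψ''(a) when a = b. (Key dissipation inequality yielding the exponential contraction of the Wasserstein distance towards self-similarity in the subcritical one-dimensional Keller–Segel equation.) -/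

import Mathlib

open MeasureTheory Real

/-- Cauchy–Schwarz: reciprocal of average ≤ average of reciprocals. -/
lemma cs_lemma_aux (f : ℝ → ℝ) (hfc : Continuous f) (hf : ∀ x, 0 < f x) :
    (∫ t in (0:ℝ)..1, f t)⁻¹ ≤ ∫ t in (0:ℝ)..1, (f t)⁻¹ := by
  have hi : IntervalIntegrable f volume 0 1 := hfc.intervalIntegrable 0 1
  have hci : Continuous fun t => (f t)⁻¹ := hfc.inv₀ fun x => (hf x).ne'
  have hi' : IntervalIntegrable (fun t => (f t)⁻¹) volume 0 1 := hci.intervalIntegrable 0 1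
  set A := ∫ t in (0:ℝ)..1, f t with hA
  set B := ∫ t in (0:ℝ)..1, (f t)⁻¹ with hB
  have hApos : 0 < A := intervalIntegral.intervalIntegral_pos_of_pos_on hi
    (fun x _ => hf x) one_pos
  have hBpos : 0 < B := intervalIntegral.intervalIntegral_pos_of_pos_on hi'
    (fun x _ => inv_pos.mpr (hf x)) one_pos
  have key : A + A^2 * B - 2*A ≥ 0 := by
    have : (∫ t in (0:ℝ)..1, (f t + A^2 * (f t)⁻¹ - 2*A)) = A + A^2*B - 2*A := by
      rw [intervalIntegral.integral_sub (hi.add (hi'.const_mul _)) (intervalIntegrable_const),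
        intervalIntegral.integral_add hi (hi'.const_mul _),
        intervalIntegral.integral_const_mul, intervalIntegral.integral_const]
      simp
      rfl
    rw [← this]
    apply intervalIntegral.integral_nonneg zero_le_one
    intro t _
    have h1 : 0 < f t := hf t
    have : f t + A^2 * (f t)⁻¹ - 2*A = (f t - A)^2 / f t := by
      field_simp
      ring
    rw [this]
    positivity
  have hAB : A ≤ A^2 * B := by linarith
  calc A⁻¹ = A / A^2 := by field_simp
    _ ≤ (A^2*B)/A^2 := by gcongr
    _ = B := by field_simp

/-- The difference quotient of an increasing C¹ map is bounded by the average
of the reciprocal of its derivative. -/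
lemma K_bound_aux (φ σ : ℝ → ℝ) (hφd : Differentiable ℝ φ) (hφσ : deriv φ = σ)
    (hσc : Continuous σ) (hσ : ∀ x, 0 < σ x) (a b : ℝ) :
    (if a = b then (σ a)⁻¹ else (a - b)/(φ a - φ b))
      ≤ ∫ t in (0:ℝ)..1, (σ (a + t*(b-a)))⁻¹ := by
  by_cases hab : a = b
  · subst hab
    simp [intervalIntegral.integral_const]
  · rw [if_neg hab]
    have hmono : StrictMono φ := strictMono_of_deriv_pos (fun x => hφσ ▸ hσ x)
    have hc : b - a ≠ 0 := sub_ne_zero.mpr (Ne.symm hab)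
    have hf : Continuous fun t => σ (a + t*(b-a)) := by fun_prop
    have hfp : ∀ t, 0 < σ (a + t*(b-a)) := fun t => hσ _
    have hA : (∫ t in (0:ℝ)..1, σ (a + t*(b-a))) = (φ b - φ a)/(b - a) := by
      have h1 : (∫ t in (0:ℝ)..1, σ ((b-a) * t + a))
          = (b-a)⁻¹ • ∫ x in (b-a)*0 + a..(b-a)*1 + a, σ x :=
        intervalIntegral.integral_comp_mul_add σ hc a
      have h2 : (∫ x in a..b, σ x) = φ b - φ a := by
        rw [← hφσ]
        exact intervalIntegral.integral_deriv_eq_sub (fun x _ => hφd x)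
          ((hφσ ▸ hσc).continuousOn.intervalIntegrable)
      simp only [show ∀ t:ℝ, a + t*(b-a) = (b-a)*t + a from fun t => by ring]
      rw [h1]
      simp only [mul_zero, zero_add, mul_one]
      rw [show b - a + a = b from by ring, h2]
      rw [smul_eq_mul]; ring
    have hkey := cs_lemma_aux _ hf hfp
    rw [hA] at hkey
    have hφne : φ a - φ b ≠ 0 := sub_ne_zero.mpr (fun h => hab (hmono.injective h))
    calc (a-b)/(φ a - φ b) = ((φ b - φ a)/(b-a))⁻¹ := by
          rw [inv_div]
          rw [show φ a - φ b = -(φ b - φ a) from by ring, show a - b = -(b-a) from by ring]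
          rw [neg_div_neg_eq]
      _ ≤ _ := hkey

/-- Change of variables / Fubini chain for the equilibrium identity. -/
lemma chain_lemma_aux (g u c : ℝ → ENNReal) (hg : Measurable g) (hu : Measurable u)
    (hc : Measurable c)
    (hu' : ∀ x, u x ≠ ⊤) (hc' : ∀ x, c x ≠ ⊤) (hg' : ∀ x, g x ≠ ⊤) :
    ∫⁻ p : ℝ, u p * ∫⁻ q : ℝ, ∫⁻ t in Set.Ioc (0:ℝ) 1, c q * g (p - t*q) * g (p - t*q + q)
      = ∫⁻ a : ℝ, ∫⁻ b : ℝ,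
          c (b - a) * (∫⁻ t in Set.Ioc (0:ℝ) 1, u (a + t*(b-a))) * g a * g b := by
  set μ := volume.restrict (Set.Ioc (0:ℝ) 1) with hμ
  calc ∫⁻ p : ℝ, u p * ∫⁻ q : ℝ, (∫⁻ t, c q * g (p - t*q) * g (p - t*q + q) ∂μ)
      = ∫⁻ p : ℝ, ∫⁻ q : ℝ, (∫⁻ t, u p * (c q * g (p - t*q) * g (p - t*q + q)) ∂μ) := by
        refine lintegral_congr fun p => ?_
        rw [← lintegral_const_mul' (u p) _ (hu' p)]
        exact congrArg _ (funext fun q => (lintegral_const_mul' (u p) _ (hu' p)).symm)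
    _ = ∫⁻ q : ℝ, ∫⁻ p : ℝ, (∫⁻ t, u p * (c q * g (p - t*q) * g (p - t*q + q)) ∂μ) := by
        refine lintegral_lintegral_swap
          (f := fun p q => ∫⁻ t, u p * (c q * g (p - t*q) * g (p - t*q + q)) ∂μ) ?_
        have h : Measurable (Function.uncurry fun (z : ℝ×ℝ) (t : ℝ) =>
            u z.1 * (c z.2 * g (z.1 - t*z.2) * g (z.1 - t*z.2 + z.2))) := by fun_prop
        exact (Measurable.lintegral_prod_right h).aemeasurable
    _ = ∫⁻ q : ℝ, (∫⁻ t, (∫⁻ p : ℝ, u p * (c q * g (p - t*q) * g (p - t*q + q))) ∂μ) := by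
        refine lintegral_congr fun q => ?_
        refine lintegral_lintegral_swap
          (f := fun p t => u p * (c q * g (p - t*q) * g (p - t*q + q))) ?_
        exact Measurable.aemeasurable (by fun_prop)
    _ = ∫⁻ q : ℝ, (∫⁻ t, (∫⁻ a : ℝ, u (a + t*q) * (c q * g a * g (a + q))) ∂μ) := by
        refine lintegral_congr fun q => lintegral_congr fun t => ?_
        rw [← lintegral_add_right_eq_self
          (fun p => u p * (c q * g (p - t*q) * g (p - t*q + q))) (t*q)]
        exact lintegral_congr fun a => by
          simp only [show a + t*q - t*q = a from by ring]
    _ = ∫⁻ q : ℝ, ∫⁻ a : ℝ, (∫⁻ t, u (a + t*q) * (c q * g a * g (a + q)) ∂μ) := by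
        refine lintegral_congr fun q => ?_
        refine (lintegral_lintegral_swap
          (f := fun a t => u (a + t*q) * (c q * g a * g (a + q))) ?_).symm
        exact Measurable.aemeasurable (by fun_prop)
    _ = ∫⁻ a : ℝ, ∫⁻ q : ℝ, (∫⁻ t, u (a + t*q) * (c q * g a * g (a + q)) ∂μ) := by
        refine lintegral_lintegral_swap
          (f := fun q a => ∫⁻ t, u (a + t*q) * (c q * g a * g (a + q)) ∂μ) ?_
        have h : Measurable (Function.uncurry fun (z : ℝ×ℝ) (t : ℝ) =>
            u (z.2 + t*z.1) * (c z.1 * g z.2 * g (z.2 + z.1))) := by fun_prop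
        exact (Measurable.lintegral_prod_right h).aemeasurable
    _ = ∫⁻ a : ℝ, ∫⁻ q : ℝ, c q * (∫⁻ t, u (a + t*q) ∂μ) * g a * g (a + q) := by
        refine lintegral_congr fun a => lintegral_congr fun q => ?_
        rw [lintegral_mul_const' (c q * g a * g (a + q)) _
          (ENNReal.mul_ne_top (ENNReal.mul_ne_top (hc' q) (hg' a)) (hg' (a+q)))]
        ring
    _ = ∫⁻ a : ℝ, ∫⁻ b : ℝ, c (b - a) * (∫⁻ t, u (a + t*(b-a)) ∂μ) * g a * g b := by
        refine lintegral_congr fun a => ?_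
        rw [← lintegral_add_right_eq_self
          (fun q : ℝ => c q * (∫⁻ t, u (a + t*q) ∂μ) * g a * g (a + q)) (-a)]
        exact lintegral_congr fun b => by
          simp only [show b + -a = b - a from by ring, show a + (b - a) = b from by ring]

/-- Pulling a null set back through `(p, (q,t)) ↦ p + f (q,t)`. -/
lemma null_pullback_aux (N : Set ℝ) (hNm : MeasurableSet N) (hN0 : volume N = 0)
    (m2 : Measure (ℝ×ℝ)) [SFinite m2] (f : ℝ×ℝ → ℝ) (hf : Measurable f) :
    (volume.prod m2) {x : ℝ × (ℝ×ℝ) | x.1 + f x.2 ∈ N} = 0 := by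
  have hAm : MeasurableSet {y : (ℝ×ℝ) × ℝ | y.2 + f y.1 ∈ N} :=
    ((measurable_snd.add (hf.comp measurable_fst))) hNm
  have hA0 : (m2.prod volume) {y : (ℝ×ℝ) × ℝ | y.2 + f y.1 ∈ N} = 0 := by
    rw [Measure.measure_prod_null hAm]
    refine Filter.Eventually.of_forall fun w => ?_
    show volume (Prod.mk w ⁻¹' {y : (ℝ×ℝ) × ℝ | y.2 + f y.1 ∈ N}) = 0
    have h : (Prod.mk w ⁻¹' {y : (ℝ×ℝ) × ℝ | y.2 + f y.1 ∈ N})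
        = (fun p : ℝ => p + f w) ⁻¹' N := rfl
    rw [h, (measurePreserving_add_right volume (f w)).measure_preimage hNm.nullMeasurableSet]
    exact hN0
  have hswap : {x : ℝ × (ℝ×ℝ) | x.1 + f x.2 ∈ N}
      = Prod.swap ⁻¹' {y : (ℝ×ℝ) × ℝ | y.2 + f y.1 ∈ N} := rfl
  rw [hswap, ← Measure.prod_swap,
    Measure.map_apply measurable_swap (measurable_swap hAm)]
  have h2 : Prod.swap ⁻¹' (Prod.swap ⁻¹' {y : (ℝ×ℝ) × ℝ | y.2 + f y.1 ∈ N})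
      = {y : (ℝ×ℝ) × ℝ | y.2 + f y.1 ∈ N} := by
    ext y; simp
  rw [h2]; exact hA0

lemma amgm_aux (d s : ℝ) (hs : s ≠ 0) (hd : d ≠ 0) (hsd : 0 < s * d) :
    d^2 ≤ d^2/2 * (d/s) + (1/2)*(s*d) := by
  have hgoal : d^2/2 * (d/s) + (1/2)*(s*d) - d^2 = (d^2 - s*d)^2/(2*(s*d)) := by
    field_simp
    ring
  have h2 : (0:ℝ) ≤ (d^2 - s*d)^2/(2*(s*d)) := by positivity
  linarith

/-- Converting a nonnegative product integral to an iterated lower integral. -/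
lemma prod_ofReal_eq_aux (ν g : ℝ → ℝ) (hg : Measurable g) (hνg : ν =ᵐ[volume] g)
    (hν0 : ∀ x, 0 ≤ ν x) (w : ℝ × ℝ → ℝ) (hw : Measurable w) (hw0 : ∀ z, 0 ≤ w z)
    (hInt : Integrable (fun z : ℝ×ℝ => w z * ν z.1 * ν z.2)) :
    ∫⁻ a : ℝ, ∫⁻ b : ℝ,
        ENNReal.ofReal (w (a, b)) * ENNReal.ofReal (g a) * ENNReal.ofReal (g b)
      = ENNReal.ofReal (∫ z : ℝ×ℝ, w z * ν z.1 * ν z.2) := by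
  rw [ofReal_integral_eq_lintegral_ofReal hInt (Filter.Eventually.of_forall fun z =>
    mul_nonneg (mul_nonneg (hw0 z) (hν0 _)) (hν0 _))]
  rw [Measure.volume_eq_prod]
  have h1 : (fun z : ℝ×ℝ => ν z.1) =ᵐ[(volume : Measure ℝ).prod volume]
      (fun z : ℝ×ℝ => g z.1) :=
    Measure.quasiMeasurePreserving_fst.ae_eq_comp hνg
  have h2 : (fun z : ℝ×ℝ => ν z.2) =ᵐ[(volume : Measure ℝ).prod volume]
      (fun z : ℝ×ℝ => g z.2) :=
    Measure.quasiMeasurePreserving_snd.ae_eq_comp hνg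
  have hcongr : (fun z : ℝ×ℝ => ENNReal.ofReal (w z * ν z.1 * ν z.2))
      =ᵐ[(volume : Measure ℝ).prod volume]
      (fun z : ℝ×ℝ => ENNReal.ofReal (w z) * ENNReal.ofReal (g z.1)
        * ENNReal.ofReal (g z.2)) := by
    filter_upwards [h1, h2] with z hz1 hz2
    rw [← hz1, ← hz2, ENNReal.ofReal_mul (mul_nonneg (hw0 z) (hν0 _)),
      ENNReal.ofReal_mul (hw0 z)]
  rw [lintegral_congr_ae hcongr]
  rw [lintegral_prod _ (by fun_prop : Measurable fun z : ℝ×ℝ =>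
    ENNReal.ofReal (w z) * ENNReal.ofReal (g z.1) * ENNReal.ofReal (g z.2)).aemeasurable]

set_option maxHeartbeats 2000000 in
/-- Key dissipation inequality yielding exponential contraction of the
Wasserstein distance towards self-similarity for the subcritical
one-dimensional Keller–Segel equation. Here `ν` is the rescaled equilibrium
(a positive probability density with zero center of mass, satisfying its
characterization identity and with second moment `1 − χ`), and `ψ'` is a
smooth optimal transport map with `ψ'' > 0`. The difference quotient
`(a−b)/(ψ'(a)−ψ'(b))` is read as `1/ψ''(a)` on the diagonal. -/
theorem dissipation_inequality_subcritical (χ : ℝ) (hχ0 : 0 < χ) (hχ1 : χ < 1)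
    (ν : ℝ → ℝ) (hν0 : ∀ x, 0 < ν x)
    (hmass : (∫ a : ℝ, ν a) = 1)
    (hcm : (∫ a : ℝ, a * ν a) = 0)
    (hchar : ∀ p : ℝ, ν p =
      ∫ q : ℝ, ∫ t in (0 : ℝ)..1,
        (χ + q ^ 2 / 2) * ν (p - t * q) * ν (p - t * q + q))
    (hmom2 : (∫ a : ℝ, a ^ 2 * ν a) = 1 - χ)
    (ψ : ℝ → ℝ) (hψ : ContDiff ℝ 2 ψ)
    (hψ'' : ∀ a, 0 < deriv (deriv ψ) a)
    (hint1 : Integrable (fun a : ℝ => (deriv (deriv ψ) a)⁻¹ * ν a))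
    (hint2 : Integrable (fun p : ℝ × ℝ =>
      (if p.1 = p.2 then (deriv (deriv ψ) p.1)⁻¹
        else (p.1 - p.2) / (deriv ψ p.1 - deriv ψ p.2)) * ν p.1 * ν p.2))
    (hint3 : Integrable (fun p : ℝ × ℝ =>
      (deriv ψ p.1 - deriv ψ p.2) * (p.1 - p.2) * ν p.1 * ν p.2))
    (hint4 : Integrable (fun a : ℝ => a * deriv ψ a * ν a))
    (hint5 : Integrable (fun a : ℝ => (deriv ψ a) ^ 2 * ν a))
    (hint6 : Integrable (fun a : ℝ => (deriv ψ a - a) ^ 2 * ν a)) :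
    -(∫ a : ℝ, (deriv (deriv ψ) a)⁻¹ * ν a) +
        χ * (∫ p : ℝ × ℝ,
          (if p.1 = p.2 then (deriv (deriv ψ) p.1)⁻¹
            else (p.1 - p.2) / (deriv ψ p.1 - deriv ψ p.2)) * ν p.1 * ν p.2) -
        (1 / 2) * (∫ p : ℝ × ℝ,
          (deriv ψ p.1 - deriv ψ p.2) * (p.1 - p.2) * ν p.1 * ν p.2) +
        2 * (∫ a : ℝ, a * deriv ψ a * ν a) + (1 - χ) -
        (∫ a : ℝ, (deriv ψ a) ^ 2 * ν a) ≤
      -∫ a : ℝ, (deriv ψ a - a) ^ 2 * ν a := by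
  classical
  -- regularity of ψ
  have hreg : Continuous (deriv (deriv ψ)) ∧ Differentiable ℝ (deriv ψ) := by
    have h1 : ContDiff ℝ ((1:ℕ) + 1) ψ := by exact_mod_cast hψ
    rw [contDiff_succ_iff_deriv] at h1
    have h2 : ContDiff ℝ ((0:ℕ) + 1) (deriv ψ) := by exact_mod_cast h1.2.2
    rw [contDiff_succ_iff_deriv] at h2
    exact ⟨h2.2.2.continuous, h2.1⟩
  set φ : ℝ → ℝ := deriv ψ with hφdef
  set σ : ℝ → ℝ := deriv φ with hσdef
  obtain ⟨hσc, hφd⟩ := hreg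
  have hmono : StrictMono φ := strictMono_of_deriv_pos (fun x => hψ'' x)
  have hν_nonneg : ∀ x, 0 ≤ ν x := fun x => (hν0 x).le
  have hν_int : Integrable ν := by
    by_contra h; rw [integral_undef h] at hmass; norm_num at hmass
  -- measurable version of ν
  obtain ⟨g₀, hg₀m, hg₀⟩ : ∃ g₀, Measurable g₀ ∧ ν =ᵐ[volume] g₀ :=
    ⟨hν_int.1.aemeasurable.mk ν, hν_int.1.aemeasurable.measurable_mk,
      hν_int.1.aemeasurable.ae_eq_mk⟩
  set g : ℝ → ℝ := fun x => max (g₀ x) 0 with hgdef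
  have hgm : Measurable g := hg₀m.max measurable_const
  have hgnn : ∀ x, 0 ≤ g x := fun x => le_max_right _ _
  have hνg : ν =ᵐ[volume] g := by
    filter_upwards [hg₀] with x hx
    rw [hgdef]; simp only [← hx, max_eq_left (hν_nonneg x)]
  set G : ℝ → ENNReal := fun x => ENNReal.ofReal (g x) with hGdef
  have hGm : Measurable G := by fun_prop
  have hGtop : ∀ x, G x ≠ ⊤ := fun x => ENNReal.ofReal_ne_top
  have hGν : (fun x => ENNReal.ofReal (ν x)) =ᵐ[volume] G := by
    filter_upwards [hνg] with x hx; rw [hGdef]; simp [hx]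
  -- line integrability
  have ha2ν : Integrable (fun a : ℝ => a^2 * ν a) := by
    by_contra h; rw [integral_undef h] at hmom2; linarith
  have haν : Integrable (fun a : ℝ => a * ν a) := by
    refine (hν_int.add ha2ν).mono' (aestronglyMeasurable_id.mul hν_int.1)
      (Filter.Eventually.of_forall fun a => ?_)
    rw [Real.norm_eq_abs]
    have h1 : |a| ≤ 1 + a^2 := by nlinarith [abs_nonneg a, sq_abs a]
    calc |a * ν a| = |a| * ν a := by rw [abs_mul, abs_of_nonneg (hν_nonneg a)]
      _ ≤ (1 + a^2) * ν a := mul_le_mul_of_nonneg_right h1 (hν_nonneg a)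
      _ = ν a + a^2 * ν a := by ring
  -- the quadratic expansion on the product space
  have hexp : ∀ (c₀ c₂ : ℝ),
      Integrable (fun z : ℝ×ℝ => (c₀ + c₂ * (z.2 - z.1)^2) * ν z.1 * ν z.2) ∧
      (∫ z : ℝ×ℝ, (c₀ + c₂ * (z.2 - z.1)^2) * ν z.1 * ν z.2)
        = c₀ + c₂ * (2*(1-χ)) := by
    intro c₀ c₂
    have hid : (fun z : ℝ×ℝ => (c₀ + c₂ * (z.2 - z.1)^2) * ν z.1 * ν z.2)
        = fun z : ℝ×ℝ => ((c₀ * (ν z.1 * ν z.2) + c₂ * ((z.1^2 * ν z.1) * ν z.2))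
            + c₂ * (ν z.1 * (z.2^2 * ν z.2))) - 2*c₂ * ((z.1 * ν z.1) * (z.2 * ν z.2)) := by
      funext z; ring
    have hpm1 : Integrable (fun z : ℝ×ℝ => ν z.1 * ν z.2) := by
      rw [Measure.volume_eq_prod]; exact hν_int.mul_prod hν_int
    have hpm2 : Integrable (fun z : ℝ×ℝ => (z.1^2 * ν z.1) * ν z.2) := by
      rw [Measure.volume_eq_prod]; exact ha2ν.mul_prod hν_int
    have hpm3 : Integrable (fun z : ℝ×ℝ => ν z.1 * (z.2^2 * ν z.2)) := by
      rw [Measure.volume_eq_prod]; exact hν_int.mul_prod ha2ν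
    have hpm4 : Integrable (fun z : ℝ×ℝ => (z.1 * ν z.1) * (z.2 * ν z.2)) := by
      rw [Measure.volume_eq_prod]; exact haν.mul_prod haν
    have hA2 : Integrable (fun z : ℝ×ℝ => c₀ * (ν z.1 * ν z.2)
        + c₂ * ((z.1^2 * ν z.1) * ν z.2)) :=
      (hpm1.const_mul c₀).add (hpm2.const_mul c₂)
    have hA3 : Integrable (fun z : ℝ×ℝ => c₀ * (ν z.1 * ν z.2)
        + c₂ * ((z.1^2 * ν z.1) * ν z.2) + c₂ * (ν z.1 * (z.2^2 * ν z.2))) :=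
      hA2.add (hpm3.const_mul c₂)
    constructor
    · rw [hid]
      exact hA3.sub (hpm4.const_mul (2*c₂))
    · rw [hid, integral_sub hA3 (hpm4.const_mul (2*c₂)),
        integral_add hA2 (hpm3.const_mul c₂),
        integral_add (hpm1.const_mul c₀) (hpm2.const_mul c₂),
        integral_const_mul, integral_const_mul, integral_const_mul, integral_const_mul]
      have e1 : (∫ z : ℝ×ℝ, ν z.1 * ν z.2) = 1 := by
        rw [Measure.volume_eq_prod]
        exact (integral_prod_mul ν ν).trans (by rw [hmass]; norm_num)
      have e2 : (∫ z : ℝ×ℝ, (z.1^2 * ν z.1) * ν z.2) = 1 - χ := by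
        rw [Measure.volume_eq_prod]
        exact (integral_prod_mul (fun a : ℝ => a^2 * ν a) ν).trans
          (by rw [hmom2, hmass]; ring)
      have e3 : (∫ z : ℝ×ℝ, ν z.1 * (z.2^2 * ν z.2)) = 1 - χ := by
        rw [Measure.volume_eq_prod]
        exact (integral_prod_mul ν (fun a : ℝ => a^2 * ν a)).trans
          (by rw [hmom2, hmass]; ring)
      have e4 : (∫ z : ℝ×ℝ, (z.1 * ν z.1) * (z.2 * ν z.2)) = 0 := by
        rw [Measure.volume_eq_prod]
        exact (integral_prod_mul (fun a : ℝ => a * ν a) (fun a : ℝ => a * ν a)).trans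
          (by rw [hcm]; ring)
      rw [e1, e2, e3, e4]; ring
  -- basic lintegral identities
  have hG1 : ∫⁻ x : ℝ, G x = 1 := by
    have h := ofReal_integral_eq_lintegral_ofReal hν_int
      (Filter.Eventually.of_forall hν_nonneg)
    rw [hmass] at h
    rw [← lintegral_congr_ae hGν, ← h, ENNReal.ofReal_one]
  -- kernel K
  set K : ℝ×ℝ → ℝ := fun z =>
    if z.1 = z.2 then (σ z.1)⁻¹ else (z.1 - z.2)/(φ z.1 - φ z.2) with hKdef
  have hKm : Measurable K := by
    refine Measurable.ite (measurableSet_eq_fun measurable_fst measurable_snd) ?_ ?_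
    · exact ((hσc.measurable.comp measurable_fst)).inv
    · exact (measurable_fst.sub measurable_snd).div
        ((hφd.continuous.measurable.comp measurable_fst).sub
          (hφd.continuous.measurable.comp measurable_snd))
  have hK0 : ∀ z : ℝ×ℝ, 0 ≤ K z := by
    intro z
    rw [hKdef]
    by_cases h : z.1 = z.2
    · simp only [h, if_pos]
      exact (inv_nonneg).mpr (hψ'' _).le
    · simp only [h, if_neg, if_false]
      rcases lt_or_gt_of_ne h with hlt | hgt
      · exact (div_pos_of_neg_of_neg (by linarith) (by
          have := hmono hlt; linarith)).le
      · exact (div_pos (by linarith) (by have := hmono hgt; linarith)).le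
  have hsd0 : ∀ z : ℝ×ℝ, 0 ≤ (φ z.1 - φ z.2) * (z.1 - z.2) := by
    intro z
    rcases lt_trichotomy z.1 z.2 with hlt | heq | hgt
    · have := hmono hlt
      have h1 : φ z.1 - φ z.2 < 0 := by linarith
      have h2 : z.1 - z.2 < 0 := by linarith
      exact (mul_pos_of_neg_of_neg h1 h2).le
    · simp [heq]
    · have := hmono hgt
      have h1 : 0 < φ z.1 - φ z.2 := by linarith
      have h2 : 0 < z.1 - z.2 := by linarith
      positivity
  
  have hφc : Continuous φ := hφd.continuous
  -- ENNReal weights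
  set c : ℝ → ENNReal := fun q => ENNReal.ofReal (χ + q^2/2) with hcdef
  have hcm' : Measurable c := by fun_prop
  have hctop : ∀ x, c x ≠ ⊤ := fun x => ENNReal.ofReal_ne_top
  set U : ℝ → ENNReal := fun x => ENNReal.ofReal ((σ x)⁻¹) with hUdef
  have hUm : Measurable U := by
    have : Measurable fun x => (σ x)⁻¹ := hσc.measurable.inv
    exact ENNReal.measurable_ofReal.comp this
  have hUtop : ∀ x, U x ≠ ⊤ := fun x => ENNReal.ofReal_ne_top
  set S : ℝ → ENNReal := fun p => ∫⁻ q : ℝ, ∫⁻ t in Set.Ioc (0:ℝ) 1,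
    c q * G (p - t*q) * G (p - t*q + q) with hSdef
  have hSm : Measurable S := by
    have h : Measurable (Function.uncurry fun (z : ℝ×ℝ) (t : ℝ) =>
        c z.2 * G (z.1 - t*z.2) * G (z.1 - t*z.2 + z.2)) := by fun_prop
    have h2 : Measurable fun z : ℝ×ℝ => ∫⁻ t in Set.Ioc (0:ℝ) 1,
        c z.2 * G (z.1 - t*z.2) * G (z.1 - t*z.2 + z.2) := h.lintegral_prod_right
    exact Measurable.lintegral_prod_right
      (f := fun p q => ∫⁻ t in Set.Ioc (0:ℝ) 1,
        c q * G (p - t*q) * G (p - t*q + q)) h2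
  -- product identities
  have hprod0 : ∫⁻ a : ℝ, ∫⁻ b : ℝ, c (b - a) * G a * G b = 1 := by
    have hW0conv : (fun z : ℝ×ℝ => (χ + (z.2 - z.1)^2/2) * ν z.1 * ν z.2)
        = fun z : ℝ×ℝ => (χ + 1/2 * (z.2 - z.1)^2) * ν z.1 * ν z.2 := by
      funext z; ring
    have hW0int : Integrable (fun z : ℝ×ℝ => (χ + (z.2-z.1)^2/2) * ν z.1 * ν z.2) := by
      rw [hW0conv]; exact (hexp χ (1/2)).1
    have hW0val : (∫ z : ℝ×ℝ, (χ + (z.2-z.1)^2/2) * ν z.1 * ν z.2) = 1 := by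
      rw [hW0conv, (hexp χ (1/2)).2]; ring
    have h := prod_ofReal_eq_aux ν g hgm hνg hν_nonneg
      (fun z => χ + (z.2 - z.1)^2/2) (by fun_prop) (fun z => by positivity) hW0int
    rw [hW0val, ENNReal.ofReal_one] at h
    exact h
  have hprodE : ∫⁻ a : ℝ, ∫⁻ b : ℝ, ENNReal.ofReal ((b - a)^2) * G a * G b
      = ENNReal.ofReal (2*(1-χ)) := by
    have hconv : (fun z : ℝ×ℝ => (z.2 - z.1)^2 * ν z.1 * ν z.2)
        = fun z : ℝ×ℝ => ((0:ℝ) + 1 * (z.2 - z.1)^2) * ν z.1 * ν z.2 := by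
      funext z; ring
    have hintE : Integrable (fun z : ℝ×ℝ => (z.2 - z.1)^2 * ν z.1 * ν z.2) := by
      rw [hconv]; exact (hexp 0 1).1
    have hval : (∫ z : ℝ×ℝ, (z.2 - z.1)^2 * ν z.1 * ν z.2) = 2*(1-χ) := by
      rw [hconv, (hexp 0 1).2]; ring
    have h := prod_ofReal_eq_aux ν g hgm hνg hν_nonneg
      (fun z => (z.2 - z.1)^2) (by fun_prop) (fun z => by positivity) hintE
    rw [hval] at h
    exact h
  have hprodK : ∫⁻ a : ℝ, ∫⁻ b : ℝ, ENNReal.ofReal (K (a, b)) * G a * G b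
      = ENNReal.ofReal (∫ p : ℝ × ℝ, (if p.1 = p.2 then (σ p.1)⁻¹
          else (p.1 - p.2) / (φ p.1 - φ p.2)) * ν p.1 * ν p.2) :=
    prod_ofReal_eq_aux ν g hgm hνg hν_nonneg K hKm hK0 hint2
  have hprodI3 : ∫⁻ a : ℝ, ∫⁻ b : ℝ, ENNReal.ofReal ((φ a - φ b) * (a - b)) * G a * G b
      = ENNReal.ofReal (∫ p : ℝ×ℝ, (φ p.1 - φ p.2) * (p.1 - p.2) * ν p.1 * ν p.2) :=
    prod_ofReal_eq_aux ν g hgm hνg hν_nonneg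
      (fun z => (φ z.1 - φ z.2) * (z.1 - z.2))
      (((hφc.measurable.comp measurable_fst).sub
        (hφc.measurable.comp measurable_snd)).mul (measurable_fst.sub measurable_snd))
      hsd0 hint3
  
  -- total mass of S
  have hSint : ∫⁻ p : ℝ, S p = 1 := by
    have hch := chain_lemma_aux G (fun _ => (1:ENNReal)) c hGm measurable_const hcm'
      (fun _ => ENNReal.one_ne_top) hctop hGtop
    have h1 : ∫⁻ p : ℝ, S p = ∫⁻ a : ℝ, ∫⁻ b : ℝ,
        c (b - a) * (∫⁻ _t in Set.Ioc (0:ℝ) 1, (1:ENNReal)) * G a * G b := by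
      rw [← hch]
      exact lintegral_congr fun p => (one_mul _).symm
    have ht1 : (∫⁻ _t in Set.Ioc (0:ℝ) 1, (1:ENNReal)) = 1 := by
      rw [lintegral_one, Measure.restrict_apply_univ, Real.volume_Ioc]
      norm_num
    rw [h1]
    simp only [ht1, mul_one]
    exact hprod0
  have hSfin : ∀ᵐ p : ℝ, S p ≠ ⊤ := by
    have h := ae_lt_top hSm (by rw [hSint]; exact ENNReal.one_ne_top)
    exact h.mono fun p hp => hp.ne
  -- a.e. replacement of ν by g inside the characterization
  have hNnull : volume {x : ℝ | ¬ ν x = g x} = 0 := by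
    have h := hνg
    rwa [Filter.EventuallyEq, ae_iff] at h
  set N : Set ℝ := toMeasurable volume {x : ℝ | ¬ ν x = g x} with hNdef
  have hNm : MeasurableSet N := measurableSet_toMeasurable _ _
  have hN0 : volume N = 0 := by rw [hNdef, measure_toMeasurable]; exact hNnull
  have hNsub : ∀ x : ℝ, x ∉ N → ν x = g x := by
    intro x hx
    by_contra hne
    exact hx (subset_toMeasurable _ _ hne)
  set m2 : Measure (ℝ×ℝ) :=
    (volume : Measure ℝ).prod (volume.restrict (Set.Ioc (0:ℝ) 1)) with hm2def
  have haeprod : ∀ᵐ p : ℝ, ∀ᵐ z : ℝ×ℝ ∂m2,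
      ν (p - z.2*z.1) = g (p - z.2*z.1)
        ∧ ν (p - z.2*z.1 + z.1) = g (p - z.2*z.1 + z.1) := by
    have h1 := null_pullback_aux N hNm hN0 m2 (fun w => -(w.2*w.1)) (by fun_prop)
    have h2 := null_pullback_aux N hNm hN0 m2 (fun w => w.1 - w.2*w.1) (by fun_prop)
    have hU : (volume.prod m2) ({x : ℝ×(ℝ×ℝ) | x.1 + -(x.2.2*x.2.1) ∈ N}
        ∪ {x : ℝ×(ℝ×ℝ) | x.1 + (x.2.1 - x.2.2*x.2.1) ∈ N}) = 0 :=
      measure_union_null h1 h2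
    have hae : ∀ᵐ x : ℝ×(ℝ×ℝ) ∂(volume.prod m2),
        ν (x.1 - x.2.2*x.2.1) = g (x.1 - x.2.2*x.2.1)
          ∧ ν (x.1 - x.2.2*x.2.1 + x.2.1) = g (x.1 - x.2.2*x.2.1 + x.2.1) := by
      filter_upwards [measure_eq_zero_iff_ae_notMem.mp hU] with x hx
      constructor
      · refine hNsub _ fun hmem => hx (Set.mem_union_left _ ?_)
        show x.1 + -(x.2.2*x.2.1) ∈ N
        rwa [← sub_eq_add_neg]
      · refine hNsub _ fun hmem => hx (Set.mem_union_right _ ?_)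
        show x.1 + (x.2.1 - x.2.2*x.2.1) ∈ N
        have heq : x.1 + (x.2.1 - x.2.2*x.2.1) = x.1 - x.2.2*x.2.1 + x.2.1 := by ring
        rwa [heq]
    exact Measure.ae_ae_of_ae_prod hae
  -- a.e. identification of S with ν
  have hSG : ∀ᵐ p : ℝ, S p = ENNReal.ofReal (ν p) := by
    filter_upwards [hSfin, haeprod] with p hpfin hpae
    set w : ℝ×ℝ → ℝ :=
      fun z => (χ + z.1^2/2) * g (p - z.2*z.1) * g (p - z.2*z.1 + z.1) with hwdef
    have hwm : Measurable w := by fun_prop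
    have hw0 : ∀ z, 0 ≤ w z := fun z =>
      mul_nonneg (mul_nonneg (by positivity) (hgnn _)) (hgnn _)
    have hcw : ∀ z : ℝ×ℝ, ENNReal.ofReal (w z)
        = c z.1 * G (p - z.2*z.1) * G (p - z.2*z.1 + z.1) := by
      intro z
      rw [hwdef]
      dsimp only
      rw [ENNReal.ofReal_mul (mul_nonneg (by positivity) (hgnn _)),
        ENNReal.ofReal_mul (by positivity : (0:ℝ) ≤ χ + z.1^2/2)]
    have hSp_joint : S p = ∫⁻ z : ℝ×ℝ, ENNReal.ofReal (w z) ∂m2 := by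
      have hmeas : AEMeasurable (Function.uncurry fun (q t : ℝ) =>
          c q * G (p - t*q) * G (p - t*q + q))
          ((volume : Measure ℝ).prod (volume.restrict (Set.Ioc (0:ℝ) 1))) :=
        Measurable.aemeasurable (by fun_prop)
      have h := lintegral_lintegral hmeas
      rw [hSdef]
      dsimp only
      rw [h]
      exact lintegral_congr fun z => (hcw ⟨z.1, z.2⟩).symm
    have hfin' : (∫⁻ z : ℝ×ℝ, ENNReal.ofReal (w z) ∂m2) < ⊤ := by
      rw [← hSp_joint]; exact hpfin.lt_top
    have hwint : Integrable w m2 := by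
      refine ⟨hwm.aestronglyMeasurable, ?_⟩
      rw [hasFiniteIntegral_iff_ofReal (Filter.Eventually.of_forall hw0)]
      exact hfin'
    have hw_toReal : ENNReal.ofReal (∫ z : ℝ×ℝ, w z ∂m2) = S p := by
      rw [ofReal_integral_eq_lintegral_ofReal hwint (Filter.Eventually.of_forall hw0),
        ← hSp_joint]
    have hiter : ν p = ∫ z : ℝ×ℝ, w z ∂m2 := by
      have h1 : ν p = ∫ q : ℝ, ∫ t in Set.Ioc (0:ℝ) 1,
          (χ + q^2/2) * ν (p - t*q) * ν (p - t*q + q) := by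
        rw [hchar p]
        exact congrArg _ (funext fun q => intervalIntegral.integral_of_le zero_le_one)
      have h2 : (∫ q : ℝ, ∫ t in Set.Ioc (0:ℝ) 1,
            (χ + q^2/2) * ν (p - t*q) * ν (p - t*q + q))
          = ∫ q : ℝ, ∫ t in Set.Ioc (0:ℝ) 1, w (q, t) := by
        refine integral_congr_ae ?_
        filter_upwards [Measure.ae_ae_of_ae_prod hpae] with q hq
        refine integral_congr_ae ?_
        filter_upwards [hq] with t ht
        rw [hwdef]
        dsimp only
        rw [ht.1, ht.2]
      have h3 : (∫ q : ℝ, ∫ t in Set.Ioc (0:ℝ) 1, w (q, t)) = ∫ z : ℝ×ℝ, w z ∂m2 :=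
        MeasureTheory.integral_integral (f := fun q t => w (q, t)) hwint
      rw [h1, h2, h3]
    rw [hiter, hw_toReal]
  
  -- pointwise kernel bound
  have hKle : ∀ a b : ℝ, ENNReal.ofReal (K (a, b))
      ≤ ∫⁻ t in Set.Ioc (0:ℝ) 1, U (a + t*(b-a)) := by
    intro a b
    have hKb := K_bound_aux φ σ hφd hσdef.symm hσc hψ'' a b
    have hcont : Continuous fun t : ℝ => (σ (a + t*(b-a)))⁻¹ :=
      (hσc.comp (by fun_prop)).inv₀ fun t => (hψ'' _).ne'
    have hio : IntegrableOn (fun t : ℝ => (σ (a + t*(b-a)))⁻¹) (Set.Ioc (0:ℝ) 1) :=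
      hcont.integrableOn_Ioc
    have heq : ENNReal.ofReal (∫ t in (0:ℝ)..1, (σ (a + t*(b-a)))⁻¹)
        = ∫⁻ t in Set.Ioc (0:ℝ) 1, U (a + t*(b-a)) := by
      rw [intervalIntegral.integral_of_le zero_le_one,
        ofReal_integral_eq_lintegral_ofReal hio
          (Filter.Eventually.of_forall fun t => inv_nonneg.mpr (hψ'' _).le)]
    calc ENNReal.ofReal (K (a, b))
        ≤ ENNReal.ofReal (∫ t in (0:ℝ)..1, (σ (a + t*(b-a)))⁻¹) :=
          ENNReal.ofReal_le_ofReal hKb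
      _ = _ := heq
  -- the main comparison
  set X2 : ENNReal := ∫⁻ a : ℝ, ∫⁻ b : ℝ,
    ENNReal.ofReal ((b-a)^2/2) * ENNReal.ofReal (K (a, b)) * G a * G b with hX2def
  have hKE : Measurable fun z : ℝ×ℝ => ENNReal.ofReal (K z) :=
    ENNReal.measurable_ofReal.comp hKm
  have hMle2 : (∫⁻ a : ℝ, ∫⁻ b : ℝ, c (b-a) * ENNReal.ofReal (K (a, b)) * G a * G b)
      ≤ ENNReal.ofReal (∫ a : ℝ, (σ a)⁻¹ * ν a) := by
    have hUSI1 : (∫⁻ p : ℝ, U p * S p)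
        = ENNReal.ofReal (∫ a : ℝ, (σ a)⁻¹ * ν a) := by
      have h1 : (∫⁻ p : ℝ, U p * S p) = ∫⁻ p : ℝ, U p * ENNReal.ofReal (ν p) :=
        lintegral_congr_ae (hSG.mono fun p hp => by
          show U p * S p = U p * ENNReal.ofReal (ν p)
          rw [hp])
      rw [h1, ofReal_integral_eq_lintegral_ofReal hint1
        (Filter.Eventually.of_forall fun a =>
          mul_nonneg (inv_nonneg.mpr (hψ'' a).le) (hν_nonneg a))]
      exact (lintegral_congr fun a => by
        rw [ENNReal.ofReal_mul (inv_nonneg.mpr (hψ'' a).le)]).symm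
    calc (∫⁻ a : ℝ, ∫⁻ b : ℝ, c (b-a) * ENNReal.ofReal (K (a, b)) * G a * G b)
        ≤ ∫⁻ a : ℝ, ∫⁻ b : ℝ,
            c (b - a) * (∫⁻ t in Set.Ioc (0:ℝ) 1, U (a + t*(b-a))) * G a * G b := by
          refine lintegral_mono fun a => lintegral_mono fun b => ?_
          exact mul_le_mul_left (mul_le_mul_left
            (mul_le_mul_right (hKle a b) (c (b-a))) (G a)) (G b)
      _ = ∫⁻ p : ℝ, U p * S p :=
          (chain_lemma_aux G U c hGm hUm hcm' hUtop hctop hGtop).symm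
      _ = _ := hUSI1
  have hsplit : (∫⁻ a : ℝ, ∫⁻ b : ℝ, c (b-a) * ENNReal.ofReal (K (a, b)) * G a * G b)
      = ENNReal.ofReal χ
          * (∫⁻ a : ℝ, ∫⁻ b : ℝ, ENNReal.ofReal (K (a, b)) * G a * G b) + X2 := by
    have step1 : (∫⁻ a : ℝ, ∫⁻ b : ℝ, c (b-a) * ENNReal.ofReal (K (a, b)) * G a * G b)
        = ∫⁻ a : ℝ, ∫⁻ b : ℝ,
            (ENNReal.ofReal χ * (ENNReal.ofReal (K (a, b)) * G a * G b)
              + ENNReal.ofReal ((b-a)^2/2) * ENNReal.ofReal (K (a, b)) * G a * G b) :=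
      lintegral_congr fun a => lintegral_congr fun b => by
        have hc2 : c (b-a) = ENNReal.ofReal χ + ENNReal.ofReal ((b-a)^2/2) := by
          rw [hcdef]
          dsimp only
          rw [← ENNReal.ofReal_add hχ0.le (by positivity)]
        rw [hc2]; ring
    have hm1 : Measurable (Function.uncurry fun (a b : ℝ) =>
        ENNReal.ofReal χ * (ENNReal.ofReal (K (a, b)) * G a * G b)) := by
      refine Measurable.const_mul ?_ _
      exact (hKE.mul (hGm.comp measurable_fst)).mul (hGm.comp measurable_snd)
    have hm2' : Measurable (Function.uncurry fun (a b : ℝ) =>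
        ENNReal.ofReal ((b-a)^2/2) * ENNReal.ofReal (K (a, b)) * G a * G b) := by
      refine Measurable.mul (Measurable.mul (Measurable.mul ?_ hKE)
        (hGm.comp measurable_fst)) (hGm.comp measurable_snd)
      fun_prop
    have step2 : (∫⁻ a : ℝ, ∫⁻ b : ℝ,
          (ENNReal.ofReal χ * (ENNReal.ofReal (K (a, b)) * G a * G b)
            + ENNReal.ofReal ((b-a)^2/2) * ENNReal.ofReal (K (a, b)) * G a * G b))
        = (∫⁻ a : ℝ, ∫⁻ b : ℝ,
            ENNReal.ofReal χ * (ENNReal.ofReal (K (a, b)) * G a * G b)) + X2 := by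
      have hinner : ∀ a : ℝ, (∫⁻ b : ℝ,
            (ENNReal.ofReal χ * (ENNReal.ofReal (K (a, b)) * G a * G b)
              + ENNReal.ofReal ((b-a)^2/2) * ENNReal.ofReal (K (a, b)) * G a * G b))
          = (∫⁻ b : ℝ, ENNReal.ofReal χ * (ENNReal.ofReal (K (a, b)) * G a * G b))
            + ∫⁻ b : ℝ, ENNReal.ofReal ((b-a)^2/2)
                * ENNReal.ofReal (K (a, b)) * G a * G b := by
        intro a
        exact lintegral_add_left (hm1.comp (measurable_prodMk_left)) _
      rw [lintegral_congr hinner]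
      exact lintegral_add_left (hm1.lintegral_prod_right) _
    rw [step1, step2, ← lintegral_const_mul' (ENNReal.ofReal χ) _ ENNReal.ofReal_ne_top]
    congr 1
    exact lintegral_congr fun a =>
      (lintegral_const_mul' (ENNReal.ofReal χ) _ ENNReal.ofReal_ne_top)
  have hM_le : ENNReal.ofReal (χ * (∫ p : ℝ × ℝ, (if p.1 = p.2 then (σ p.1)⁻¹
        else (p.1 - p.2) / (φ p.1 - φ p.2)) * ν p.1 * ν p.2)) + X2
      ≤ ENNReal.ofReal (∫ a : ℝ, (σ a)⁻¹ * ν a) := by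
    rw [ENNReal.ofReal_mul hχ0.le, ← hprodK]
    rw [← hsplit]
    exact hMle2
  
  -- pointwise AM-GM claim
  have hptclaim : ∀ a b : ℝ, (b-a)^2
      ≤ (b-a)^2/2 * K (a, b) + (1/2)*((φ a - φ b)*(a-b)) := by
    intro a b
    by_cases hab : a = b
    · subst hab; simp
    · have hs : φ a - φ b ≠ 0 := sub_ne_zero.mpr fun h => hab (hmono.injective h)
      have hd : a - b ≠ 0 := sub_ne_zero.mpr hab
      have hsd : 0 < (φ a - φ b) * (a - b) :=
        lt_of_le_of_ne (hsd0 (a, b)) (Ne.symm (mul_ne_zero hs hd))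
      have hK : K (a, b) = (a-b)/(φ a - φ b) := by
        simp only [hKdef]
        rw [if_neg hab]
      rw [hK, show (b-a)^2 = (a-b)^2 from by ring]
      exact amgm_aux (a-b) (φ a - φ b) hs hd hsd
  have hsdm : Measurable fun z : ℝ×ℝ => (φ z.1 - φ z.2) * (z.1 - z.2) :=
    ((hφc.measurable.comp measurable_fst).sub
      (hφc.measurable.comp measurable_snd)).mul (measurable_fst.sub measurable_snd)
  have hprodY : (∫⁻ a : ℝ, ∫⁻ b : ℝ,
        ENNReal.ofReal ((1/2)*((φ a - φ b)*(a-b))) * G a * G b)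
      = ENNReal.ofReal ((1/2)
          * ∫ p : ℝ×ℝ, (φ p.1 - φ p.2) * (p.1 - p.2) * ν p.1 * ν p.2) := by
    have hconv : (fun z : ℝ×ℝ => ((1/2)*((φ z.1 - φ z.2)*(z.1 - z.2))) * ν z.1 * ν z.2)
        = fun z : ℝ×ℝ => (1/2) * ((φ z.1 - φ z.2) * (z.1 - z.2) * ν z.1 * ν z.2) := by
      funext z; ring
    have hintY : Integrable (fun z : ℝ×ℝ =>
        ((1/2)*((φ z.1 - φ z.2)*(z.1 - z.2))) * ν z.1 * ν z.2) := by
      rw [hconv]; exact hint3.const_mul _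
    have h := prod_ofReal_eq_aux ν g hgm hνg hν_nonneg
      (fun z => (1/2)*((φ z.1 - φ z.2)*(z.1 - z.2)))
      (hsdm.const_mul _) (fun z => mul_nonneg (by norm_num) (hsd0 z)) hintY
    rw [h, hconv, integral_const_mul]
  have hclaim2 : ENNReal.ofReal (2*(1-χ))
      ≤ X2 + ENNReal.ofReal ((1/2)
          * ∫ p : ℝ×ℝ, (φ p.1 - φ p.2) * (p.1 - p.2) * ν p.1 * ν p.2) := by
    rw [← hprodE, ← hprodY, hX2def]
    have hmF1 : Measurable (Function.uncurry fun (a b : ℝ) =>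
        ENNReal.ofReal ((b-a)^2/2) * ENNReal.ofReal (K (a, b)) * G a * G b) := by
      refine Measurable.mul (Measurable.mul (Measurable.mul ?_ hKE)
        (hGm.comp measurable_fst)) (hGm.comp measurable_snd)
      fun_prop
    calc (∫⁻ a : ℝ, ∫⁻ b : ℝ, ENNReal.ofReal ((b - a)^2) * G a * G b)
        ≤ ∫⁻ a : ℝ, ∫⁻ b : ℝ,
            (ENNReal.ofReal ((b-a)^2/2) * ENNReal.ofReal (K (a, b)) * G a * G b
              + ENNReal.ofReal ((1/2)*((φ a - φ b)*(a-b))) * G a * G b) := by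
          refine lintegral_mono fun a => lintegral_mono fun b => ?_
          calc ENNReal.ofReal ((b-a)^2) * G a * G b
              ≤ ENNReal.ofReal ((b-a)^2/2 * K (a, b)
                  + (1/2)*((φ a - φ b)*(a-b))) * G a * G b :=
                mul_le_mul_left (mul_le_mul_left
                  (ENNReal.ofReal_le_ofReal (hptclaim a b)) _) _
            _ = (ENNReal.ofReal ((b-a)^2/2 * K (a, b))
                  + ENNReal.ofReal ((1/2)*((φ a - φ b)*(a-b)))) * G a * G b := by
                rw [ENNReal.ofReal_add (mul_nonneg (by positivity) (hK0 (a, b)))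
                  (mul_nonneg (by norm_num) (hsd0 (a, b)))]
            _ = ENNReal.ofReal ((b-a)^2/2) * ENNReal.ofReal (K (a, b)) * G a * G b
                  + ENNReal.ofReal ((1/2)*((φ a - φ b)*(a-b))) * G a * G b := by
                rw [add_mul, add_mul, ENNReal.ofReal_mul (by positivity)]
      _ = (∫⁻ a : ℝ, ∫⁻ b : ℝ,
            ENNReal.ofReal ((b-a)^2/2) * ENNReal.ofReal (K (a, b)) * G a * G b)
          + ∫⁻ a : ℝ, ∫⁻ b : ℝ,
            ENNReal.ofReal ((1/2)*((φ a - φ b)*(a-b))) * G a * G b := by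
          have hinner : ∀ a : ℝ, (∫⁻ b : ℝ,
              (ENNReal.ofReal ((b-a)^2/2) * ENNReal.ofReal (K (a, b)) * G a * G b
                + ENNReal.ofReal ((1/2)*((φ a - φ b)*(a-b))) * G a * G b))
            = (∫⁻ b : ℝ,
                ENNReal.ofReal ((b-a)^2/2) * ENNReal.ofReal (K (a, b)) * G a * G b)
              + ∫⁻ b : ℝ, ENNReal.ofReal ((1/2)*((φ a - φ b)*(a-b))) * G a * G b := by
            intro a
            exact lintegral_add_left (hmF1.comp (measurable_prodMk_left)) _
          rw [lintegral_congr hinner]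
          exact lintegral_add_left (hmF1.lintegral_prod_right) _
  -- real consequences
  have hI1nn : 0 ≤ ∫ a : ℝ, (σ a)⁻¹ * ν a :=
    integral_nonneg fun a => mul_nonneg (inv_nonneg.mpr (hψ'' a).le) (hν_nonneg a)
  have hI2nn : 0 ≤ ∫ p : ℝ×ℝ, (if p.1 = p.2 then (σ p.1)⁻¹
      else (p.1 - p.2) / (φ p.1 - φ p.2)) * ν p.1 * ν p.2 :=
    integral_nonneg fun z => mul_nonneg (mul_nonneg (hK0 z) (hν_nonneg _)) (hν_nonneg _)
  have hI3nn : 0 ≤ ∫ p : ℝ×ℝ, (φ p.1 - φ p.2) * (p.1 - p.2) * ν p.1 * ν p.2 :=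
    integral_nonneg fun z => mul_nonneg (mul_nonneg (hsd0 z) (hν_nonneg _)) (hν_nonneg _)
  have hX2ne : X2 ≠ ⊤ := by
    intro h
    rw [h, add_top] at hM_le
    exact ENNReal.ofReal_ne_top (top_le_iff.mp hM_le)
  have hreal1 : χ * (∫ p : ℝ×ℝ, (if p.1 = p.2 then (σ p.1)⁻¹
        else (p.1 - p.2) / (φ p.1 - φ p.2)) * ν p.1 * ν p.2) + X2.toReal
      ≤ ∫ a : ℝ, (σ a)⁻¹ * ν a := by
    have h := ENNReal.toReal_mono ENNReal.ofReal_ne_top hM_le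
    rwa [ENNReal.toReal_add ENNReal.ofReal_ne_top hX2ne,
      ENNReal.toReal_ofReal (mul_nonneg hχ0.le hI2nn),
      ENNReal.toReal_ofReal hI1nn] at h
  have hreal2 : 2*(1-χ) ≤ X2.toReal
      + (1/2) * (∫ p : ℝ×ℝ, (φ p.1 - φ p.2) * (p.1 - p.2) * ν p.1 * ν p.2) := by
    have h := ENNReal.toReal_mono
      (ENNReal.add_ne_top.mpr ⟨hX2ne, ENNReal.ofReal_ne_top⟩) hclaim2
    rwa [ENNReal.toReal_ofReal (by linarith),
      ENNReal.toReal_add hX2ne ENNReal.ofReal_ne_top,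
      ENNReal.toReal_ofReal (mul_nonneg (by norm_num) hI3nn)] at h
  have hI6 : (∫ a : ℝ, (φ a - a)^2 * ν a)
      = (∫ a : ℝ, φ a^2 * ν a) - 2*(∫ a : ℝ, a * φ a * ν a) + (1-χ) := by
    have hid : (fun a : ℝ => (φ a - a)^2 * ν a)
        = fun a => (φ a^2 * ν a - 2 * (a * φ a * ν a)) + a^2 * ν a := funext fun a => by ring
    have hsubint : Integrable (fun a : ℝ => φ a^2 * ν a - 2 * (a * φ a * ν a)) :=
      hint5.sub (hint4.const_mul 2)
    rw [hid, integral_add hsubint ha2ν,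
      integral_sub hint5 (hint4.const_mul 2), integral_const_mul, hmom2]
  rw [hI6]
  linarith [hreal1, hreal2]
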